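/- Let k be a field and A a finite set of points of k^n, and let λ be the minimal element of E(D(A)) with respect to the lexicographic ordering. Then λ = (#p(A), 0, …, 0), where p(A) ⊆ k is the image of A under the projection onto the first coordinate; consequently the polynomial ∏_{a₁ ∈ p(A)} (X_1 − a₁) lies in the vanishing ideal I(A), has lexicographic leading term X_1^{#p(A)} = X^λ, and all its lower terms have exponents strictly below λ (hence outside λ + ℕ₀^n). -/

import Mathlib

/-- `D ∈ 𝒟ₙ`: a finite set `D ⊆ ℕ₀ⁿ` (given as a `Finset`) such that whenever `d ∈ D`
and `dᵢ ≠ 0`, then `d − eᵢ ∈ D`. -/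
def IsDset {n : ℕ} (D : Finset (Fin n → ℕ)) : Prop :=
  ∀ d ∈ D, ∀ i : Fin n, d i ≠ 0 → d - Pi.single i 1 ∈ D

variable {k : Type*} [Field k] [DecidableEq k]

/-- The set `D(A) ⊆ ℕ₀ⁿ` attached to a finite set of points `A ⊆ kⁿ`, defined by
induction on `n`.  For `n = 0`, `D(A)` is empty if `A` is and the single point of `ℕ₀⁰`
otherwise (so that for `n = 1` one gets `D(A) = {0, 1, …, #A − 1}`).  For `n + 1`:
writing `p(A)` for the set of first coordinates of `A` and
`H a₁ = p⁻¹(a₁) ∩ A ⊆ kⁿ` (via the projection `Fin.tail` forgetting the first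
coordinate), `D(A) = Σ_{a₁ ∈ p(A)} D(H a₁)`, the sum with respect to the addition `+`
on `𝒟`; spelled out via the closed formula for such sums, `d ∈ D(A)` iff
`Fin.tail d ∈ ⋃_{a₁ ∈ p(A)} D(H a₁)` and `d 0 < #{a₁ ∈ p(A) : Fin.tail d ∈ D(H a₁)}`. -/
def DofA : (n : ℕ) → Finset (Fin n → k) → Finset (Fin n → ℕ)
  | 0, A => A.image (fun _ => (fun _ => 0))
  | (n + 1), A =>
      ((A.image (fun a => a 0)).biUnion
          (fun a1 => DofA n ((A.filter (fun a => a 0 = a1)).image (fun a => Fin.tail a)))).biUnion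
        (fun dh =>
          (Finset.range
              (((A.image (fun a => a 0)).filter
                  (fun a1 =>
                    dh ∈ DofA n ((A.filter (fun a => a 0 = a1)).image (fun a => Fin.tail a)))).card)).image
            (fun j => Fin.cons j dh))


/-- The strict lexicographic order on exponent vectors corresponding to the
lexicographic monomial ordering with `X₁ < X₂ < … < Xₙ`: the exponents of the
variables with *larger* index are compared first. -/
def lexLt {n : ℕ} (α β : Fin n → ℕ) : Prop :=
  ∃ i : Fin n, α i < β i ∧ ∀ j : Fin n, i < j → α j = β j

/-- The (non-strict) lexicographic order corresponding to `X₁ < X₂ < … < Xₙ`. -/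
def lexLe {n : ℕ} (α β : Fin n → ℕ) : Prop :=
  lexLt α β ∨ α = β

/-- Membership in the limiting set `E(D)`: `β ∉ D` and whenever `βᵢ ≠ 0`,
then `β − eᵢ ∈ D`. -/
def inE {n : ℕ} (D : Finset (Fin n → ℕ)) (β : Fin n → ℕ) : Prop :=
  β ∉ D ∧ ∀ i : Fin n, β i ≠ 0 → β - Pi.single i 1 ∈ D

/-- The coefficient of the monomial `X^α` in the multivariate polynomial `f`,
with the exponent given as a function `Fin n → ℕ`. -/
noncomputable def coeffv {n : ℕ} {R : Type*} [CommSemiring R]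
    (f : MvPolynomial (Fin n) R) (α : Fin n → ℕ) : R :=
  MvPolynomial.coeff (Finsupp.equivFunOnFinite.symm α) f


lemma mem_DofA_succ {n : ℕ} (A : Finset (Fin (n+1) → k)) (d : Fin (n+1) → ℕ) :
    d ∈ DofA (n+1) A ↔
      (∃ a1 ∈ A.image (fun a => a 0),
          Fin.tail d ∈ DofA n ((A.filter (fun a => a 0 = a1)).image (fun a => Fin.tail a))) ∧
      d 0 < ((A.image (fun a => a 0)).filter
          (fun a1 => Fin.tail d ∈ DofA n ((A.filter (fun a => a 0 = a1)).image (fun a => Fin.tail a)))).card := by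
  constructor
  · intro hd
    simp only [DofA, Finset.mem_biUnion] at hd
    obtain ⟨dh, hdh, hmem⟩ := hd
    obtain ⟨j, hj, hcons⟩ := Finset.mem_image.mp hmem
    rw [Finset.mem_range] at hj
    have h1 : Fin.tail d = dh := by rw [← hcons]; simp
    have h2 : d 0 = j := by rw [← hcons]; simp
    rw [h1, h2]
    exact ⟨hdh, hj⟩
  · rintro ⟨h1, h2⟩
    simp only [DofA, Finset.mem_biUnion]
    exact ⟨Fin.tail d, h1, Finset.mem_image.mpr ⟨d 0, Finset.mem_range.mpr h2, Fin.cons_self_tail d⟩⟩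

lemma zero_mem_DofA : ∀ (n : ℕ) (B : Finset (Fin n → k)), B.Nonempty → (fun _ => 0 : Fin n → ℕ) ∈ DofA n B
  | 0, B, ⟨a, ha⟩ => by
      simp only [DofA, Finset.mem_image]
      exact ⟨a, ha, trivial⟩
  | (n+1), B, ⟨a, ha⟩ => by
      rw [mem_DofA_succ]
      have htail : Fin.tail (fun _ => 0 : Fin (n+1) → ℕ) = (fun _ => 0) := rfl
      have hH : (fun _ => 0 : Fin n → ℕ) ∈ DofA n ((B.filter (fun b => b 0 = a 0)).image (fun b => Fin.tail b)) :=
        zero_mem_DofA n _ ⟨Fin.tail a, Finset.mem_image_of_mem _ (Finset.mem_filter.mpr ⟨ha, rfl⟩)⟩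
      constructor
      · exact ⟨a 0, Finset.mem_image_of_mem _ ha, by rw [htail]; exact hH⟩
      · apply Finset.card_pos.mpr
        exact ⟨a 0, Finset.mem_filter.mpr ⟨Finset.mem_image_of_mem _ ha, by rw [htail]; exact hH⟩⟩

lemma filter_zero {n : ℕ} (A : Finset (Fin (n+1) → k)) :
    ((A.image (fun a => a 0)).filter (fun a1 =>
        (fun _ => 0 : Fin n → ℕ) ∈ DofA n ((A.filter (fun a => a 0 = a1)).image (fun a => Fin.tail a))))
      = A.image (fun a => a 0) := by
  apply Finset.filter_true_of_mem
  intro a1 ha1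
  obtain ⟨a, ha, rfl⟩ := Finset.mem_image.mp ha1
  exact zero_mem_DofA n _ ⟨Fin.tail a, Finset.mem_image_of_mem _ (Finset.mem_filter.mpr ⟨ha, rfl⟩)⟩

lemma cons_mem_DofA {n : ℕ} {A : Finset (Fin (n+1) → k)} {t : ℕ} (hA : A.Nonempty)
    (ht : t < (A.image (fun a => a 0)).card) :
    (Fin.cons t (fun _ => 0) : Fin (n+1) → ℕ) ∈ DofA (n+1) A := by
  rw [mem_DofA_succ]
  simp only [Fin.tail_cons, Fin.cons_zero]
  obtain ⟨a, ha⟩ := hA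
  constructor
  · exact ⟨a 0, Finset.mem_image_of_mem _ ha,
      zero_mem_DofA n _ ⟨Fin.tail a, Finset.mem_image_of_mem _ (Finset.mem_filter.mpr ⟨ha, rfl⟩)⟩⟩
  · rw [filter_zero]; exact ht

lemma beta_inE {n : ℕ} (A : Finset (Fin (n+1) → k)) :
    (Fin.cons (A.image (fun a => a 0)).card (fun _ => 0) : Fin (n+1) → ℕ) ∉ DofA (n+1) A ∧
    ∀ i : Fin (n+1), (Fin.cons (A.image (fun a => a 0)).card (fun _ => 0) : Fin (n+1) → ℕ) i ≠ 0 →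
      (Fin.cons (A.image (fun a => a 0)).card (fun _ => 0) : Fin (n+1) → ℕ) - Pi.single i 1 ∈ DofA (n+1) A := by
  set m := (A.image (fun a => a 0)).card with hm
  constructor
  · intro h
    rw [mem_DofA_succ] at h
    have h2 := h.2
    simp only [Fin.cons_zero, Fin.tail_cons] at h2
    exact absurd (lt_of_lt_of_le h2 (Finset.card_filter_le _ _)) (lt_irrefl m)
  · intro i hi
    rcases Fin.eq_zero_or_eq_succ i with rfl | ⟨j, rfl⟩
    · simp only [Fin.cons_zero] at hi
      have hmpos : 0 < m := Nat.pos_of_ne_zero hi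
      have hA : A.Nonempty := Finset.image_nonempty.mp (Finset.card_pos.mp hmpos)
      have heq : (Fin.cons m (fun _ => 0) : Fin (n+1) → ℕ) - Pi.single 0 1
          = Fin.cons (m - 1) (fun _ => 0) := by
        funext i
        refine Fin.cases ?_ (fun j => ?_) i
        · simp
        · simp [Pi.single_eq_of_ne (Fin.succ_ne_zero j)]
      rw [heq]
      exact cons_mem_DofA hA (Nat.sub_lt hmpos one_pos)
    · exfalso; exact hi (Fin.cons_succ _ _ _)

lemma pi_single_eq_cons {n : ℕ} (m : ℕ) :
    (Pi.single (0 : Fin (n+1)) m : Fin (n+1) → ℕ) = Fin.cons m (fun _ => 0) := by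
  funext i
  refine Fin.cases ?_ (fun j => ?_) i
  · simp
  · simp [Pi.single_eq_of_ne (Fin.succ_ne_zero j)]


lemma coeffv_prodX {k : Type*} [Field k] [DecidableEq k] {n : ℕ} (P : Finset k) (γ : Fin (n+1) → ℕ) :
    coeffv (∏ a1 ∈ P, (MvPolynomial.X 0 - MvPolynomial.C a1 : MvPolynomial (Fin (n+1)) k)) γ =
      if Pi.single (0 : Fin (n+1)) (γ 0) = γ
        then (∏ a1 ∈ P, (Polynomial.X - Polynomial.C a1 : Polynomial k)).coeff (γ 0) else 0 := by
  classical
  set q := ∏ a1 ∈ P, (Polynomial.X - Polynomial.C a1 : Polynomial k) with hq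
  have hg : (∏ a1 ∈ P, (MvPolynomial.X (0 : Fin (n+1)) - MvPolynomial.C a1 : MvPolynomial (Fin (n+1)) k))
      = Polynomial.eval₂ MvPolynomial.C (MvPolynomial.X 0) q := by
    rw [hq, Polynomial.eval₂_finset_prod]
    refine Finset.prod_congr rfl (fun a1 _ => ?_)
    rw [Polynomial.eval₂_sub, Polynomial.eval₂_X, Polynomial.eval₂_C]
  unfold coeffv
  rw [hg, Polynomial.eval₂_eq_sum_range, MvPolynomial.coeff_sum]
  have hterm : ∀ i : ℕ, MvPolynomial.coeff (Finsupp.equivFunOnFinite.symm γ)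
      (MvPolynomial.C (q.coeff i) * MvPolynomial.X (0 : Fin (n+1)) ^ i)
      = if Pi.single (0 : Fin (n+1)) i = γ then q.coeff i else 0 := by
    intro i
    rw [MvPolynomial.coeff_C_mul, MvPolynomial.coeff_X_pow, mul_ite, mul_one, mul_zero]
    congr 1
    rw [Equiv.eq_symm_apply]
    show (⇑(Finsupp.single (0 : Fin (n+1)) i) = γ) = _
    rw [Finsupp.single_eq_pi_single]
  simp only [hterm]
  by_cases hγ : Pi.single (0 : Fin (n+1)) (γ 0) = γ
  · rw [if_pos hγ]
    have h2 : ∀ i : ℕ, (Pi.single (0 : Fin (n+1)) i = γ) ↔ i = γ 0 := by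
      intro i
      constructor
      · intro h
        have := congrFun h 0
        simpa using this
      · rintro rfl
        exact hγ
    simp only [h2]
    rw [Finset.sum_ite_eq' (Finset.range (q.natDegree + 1)) (γ 0) (fun i => q.coeff i)]
    split_ifs with h
    · rfl
    · rw [Finset.mem_range, not_lt] at h
      exact (Polynomial.coeff_eq_zero_of_natDegree_lt (by omega)).symm
  · rw [if_neg hγ]
    refine Finset.sum_eq_zero (fun i _ => ?_)
    rw [if_neg]
    intro h
    have hi : i = γ 0 := by
      have := congrFun h 0
      simpa using this
    exact hγ (hi ▸ h)


/-- If `λ` is the lexicographically minimal element of `E(D(A))`, then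
`λ = (#p(A), 0, …, 0)` where `p(A)` is the set of first coordinates of points of `A`;
consequently `g = ∏_{a₁ ∈ p(A)} (X₁ − a₁)` vanishes at every point of `A`, its
lexicographic leading term is `X₁^{#p(A)} = X^λ` (coefficient `1`), and every exponent
of a lower term of `g` is lexicographically strictly below `λ` (hence lies outside
`λ + ℕ₀ⁿ`). -/
theorem stmt_18 (n : ℕ) (A : Finset (Fin (n + 1) → k)) (lam : Fin (n + 1) → ℕ)
    (hlam : inE (DofA (n + 1) A) lam)
    (hmin : ∀ μ : Fin (n + 1) → ℕ, inE (DofA (n + 1) A) μ → lexLe lam μ) :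
    lam = Fin.cons (A.image (fun a => a 0)).card (fun _ => 0) ∧
    (∀ a ∈ A, MvPolynomial.eval a
        (∏ a1 ∈ A.image (fun a => a 0),
          (MvPolynomial.X 0 - MvPolynomial.C a1 : MvPolynomial (Fin (n + 1)) k)) = 0) ∧
    coeffv (∏ a1 ∈ A.image (fun a => a 0),
        (MvPolynomial.X 0 - MvPolynomial.C a1 : MvPolynomial (Fin (n + 1)) k)) lam = 1 ∧
    (∀ γ : Fin (n + 1) → ℕ,
      coeffv (∏ a1 ∈ A.image (fun a => a 0),
          (MvPolynomial.X 0 - MvPolynomial.C a1 : MvPolynomial (Fin (n + 1)) k)) γ ≠ 0 →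
        γ ≠ lam → lexLt γ lam ∧ ¬ lam ≤ γ) := by
  classical
  have hβ := beta_inE A
  have h1 : lam = Fin.cons (A.image (fun a => a 0)).card (fun _ => 0) := by
    rcases hmin _ ⟨hβ.1, hβ.2⟩ with hlt | heq
    · exfalso
      obtain ⟨i, hi, hj⟩ := hlt
      rcases Fin.eq_zero_or_eq_succ i with rfl | ⟨j, rfl⟩
      · have hl0 : lam 0 < (A.image (fun a => a 0)).card := by simpa using hi
        have hlameq : lam = Fin.cons (lam 0) (fun _ => 0) := by
          funext i'
          refine Fin.cases rfl (fun j' => ?_) i'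
          rw [Fin.cons_succ]
          have := hj (Fin.succ j') (Fin.succ_pos j')
          simpa using this
        have hA : A.Nonempty := Finset.image_nonempty.mp
          (Finset.card_pos.mp (lt_of_le_of_lt (Nat.zero_le _) hl0))
        exact hlam.1 (hlameq ▸ cons_mem_DofA hA hl0)
      · have h0 : (Fin.cons (A.image (fun a => a 0)).card (fun _ => 0) : Fin (n+1) → ℕ) (Fin.succ j) = 0 :=
          Fin.cons_succ _ _ _
        rw [h0] at hi
        exact absurd hi (Nat.not_lt_zero _)
    · exact heq
  subst h1
  set m := (A.image (fun a => a 0)).card with hm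
  set q := ∏ a1 ∈ A.image (fun a => a 0), (Polynomial.X - Polynomial.C a1 : Polynomial k) with hq
  have hmonic : q.Monic :=
    Polynomial.monic_prod_of_monic _ _ (fun a _ => Polynomial.monic_X_sub_C a)
  have hdeg : q.natDegree = m := by
    rw [hq, Polynomial.natDegree_prod_of_monic _ _ (fun a _ => Polynomial.monic_X_sub_C a)]
    simp [Polynomial.natDegree_X_sub_C]
    exact hm.symm
  refine ⟨rfl, ?_, ?_, ?_⟩
  · intro a ha
    rw [map_prod]
    apply Finset.prod_eq_zero (Finset.mem_image_of_mem (fun a => a 0) ha)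
    simp
  · rw [coeffv_prodX]
    rw [if_pos (by rw [Fin.cons_zero, pi_single_eq_cons])]
    rw [Fin.cons_zero, ← hq, ← hdeg]
    exact hmonic.coeff_natDegree
  · intro γ hne hγlam
    rw [coeffv_prodX] at hne
    by_cases hs : Pi.single (0 : Fin (n+1)) (γ 0) = γ
    swap
    · rw [if_neg hs] at hne
      exact absurd rfl hne
    rw [if_pos hs, ← hq] at hne
    have hle : γ 0 ≤ m := hdeg ▸ Polynomial.le_natDegree_of_ne_zero hne
    have hne0 : γ 0 ≠ m := by
      intro h
      exact hγlam (by rw [← hs, h, pi_single_eq_cons])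
    have hlt : γ 0 < m := lt_of_le_of_ne hle hne0
    constructor
    · refine ⟨0, ?_, fun j hj => ?_⟩
      · simpa using hlt
      · have hj0 : j ≠ 0 := hj.ne'
        rw [← hs, Pi.single_eq_of_ne hj0, ← pi_single_eq_cons, Pi.single_eq_of_ne hj0]
    · intro hle'
      have h0 : m ≤ γ 0 := hle' 0
      exact absurd h0 (not_le.mpr hlt)
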